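/- arXiv:1004.3484 — 3 statements merged into one kernel-verified Lean document; each statement's English description precedes it below -/
import Mathlib

section
/- Let L ≥ 1 and let J ⊆ {1,…,L} be a nonempty set with |J| = l. For every α ∈ (0,1) there exist elements j₁, j₂ ∈ J such that l/2 ≤ j₁ ≤ j₂ ≤ (1+α) j₁ and |J ∩ [j₁, j₂]| ≥ c_α · l / log(2L/l), where c_α > 0 depends only on α. -/
set_option maxHeartbeats 2000000 in
/-- Regularization Lemma: for a nonempty `J ⊆ {1,…,L}` with `|J| = l` and `α ∈ (0,1)`,
there exist `j₁, j₂ ∈ J` with `l/2 ≤ j₁ ≤ j₂ ≤ (1+α) j₁` and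
`|J ∩ [j₁, j₂]| ≥ c_α · l / log₂(2L/l)`, where `c_α > 0` depends only on `α`. -/
theorem stmt2 (α : ℝ) (hα : α ∈ Set.Ioo (0:ℝ) 1) :
    ∃ c > 0, ∀ (L : ℕ) (J : Finset ℕ), 1 ≤ L → J ⊆ Finset.Icc 1 L → J.Nonempty →
      ∃ j₁ ∈ J, ∃ j₂ ∈ J,
        (J.card : ℝ) / 2 ≤ j₁ ∧ j₁ ≤ j₂ ∧ (j₂ : ℝ) ≤ (1 + α) * j₁ ∧
        c * J.card / Real.logb 2 (2 * L / J.card) ≤ ((J ∩ Finset.Icc j₁ j₂).card : ℝ) := by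
  obtain ⟨hα0, hα1⟩ := hα
  set β : ℝ := 1 + α with hβdef
  have hβ1 : 1 < β := by rw [hβdef]; linarith
  have hβ0 : 0 < β := by linarith
  have hlogβ : 0 < Real.logb 2 β := Real.logb_pos one_lt_two hβ1
  set D : ℝ := 1 / Real.logb 2 β + 1 with hDdef
  have hD0 : 0 < D := by positivity
  refine ⟨1 / (2 * D), by positivity, ?_⟩
  intro L J hL hJL hJne
  set l := J.card with hldef
  have hl1 : 1 ≤ l := Finset.card_pos.mpr hJne
  have hlL : l ≤ L := by
    have := Finset.card_le_card hJL
    simpa using this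
  have hl0R : (0:ℝ) < (l:ℝ) := by exact_mod_cast hl1
  -- threshold
  set t : ℕ := (l + 1) / 2 with htdef
  have ht1 : 1 ≤ t := by omega
  have h2t : l ≤ 2 * t := by omega
  have h2t' : 2 * t ≤ l + 1 := by omega
  have ht_ge : (l : ℝ) / 2 ≤ (t : ℝ) := by
    have : (l:ℝ) ≤ 2 * t := by exact_mod_cast h2t
    linarith
  have ht_le : (t : ℝ) ≤ ((l:ℝ) + 1) / 2 := by
    have : (2:ℝ) * t ≤ (l:ℝ) + 1 := by exact_mod_cast h2t'
    linarith
  have ht0R : (0:ℝ) < (t:ℝ) := by exact_mod_cast ht1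
  -- the large elements
  set J' := J.filter (fun j => t ≤ j) with hJ'def
  have hJ'sub : J' ⊆ J := Finset.filter_subset _ _
  have hcard' : (l : ℝ) / 2 ≤ (J'.card : ℝ) := by
    have hsplit : J'.card + (J.filter (fun j => ¬ t ≤ j)).card = l :=
      Finset.card_filter_add_card_filter_not (fun j => t ≤ j)
    have hsub2 : J.filter (fun j => ¬ t ≤ j) ⊆ Finset.Icc 1 (t - 1) := by
      intro j hj
      simp only [Finset.mem_filter, not_le] at hj
      have h1 : 1 ≤ j ∧ j ≤ L := Finset.mem_Icc.mp (hJL hj.1)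
      exact Finset.mem_Icc.mpr ⟨h1.1, by omega⟩
    have hle : (J.filter (fun j => ¬ t ≤ j)).card ≤ t - 1 := by
      have := Finset.card_le_card hsub2
      simpa [Nat.card_Icc] using this
    have hnat : l + 1 ≤ J'.card + t := by omega
    have hR : (l:ℝ) + 1 ≤ (J'.card : ℝ) + t := by exact_mod_cast hnat
    linarith
  have hcard'pos : (0:ℝ) < (J'.card : ℝ) := by linarith
  -- blocks
  set f : ℕ → ℕ := fun j => ⌊Real.logb β ((j : ℝ) / (t : ℝ))⌋₊ with hfdef
  set G : ℝ := Real.logb 2 (2 * (L:ℝ) / (l:ℝ)) with hGdef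
  have h2Ll : (2:ℝ) ≤ 2 * (L:ℝ) / (l:ℝ) := by
    rw [le_div_iff₀ hl0R]
    have : (l:ℝ) ≤ (L:ℝ) := by exact_mod_cast hlL
    linarith
  have hG1 : (1:ℝ) ≤ G := by
    have := Real.logb_le_logb_of_le one_lt_two (by norm_num : (0:ℝ) < 2) h2Ll
    simpa [hGdef, Real.logb_self_eq_one one_lt_two] using this
  have hG0 : (0:ℝ) < G := by linarith
  set K : ℕ := ⌊Real.logb β (2 * (L:ℝ) / (l:ℝ))⌋₊ + 1 with hKdef
  have hK0 : 0 < K := by omega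
  have hK0R : (0:ℝ) < (K:ℝ) := by exact_mod_cast hK0
  -- K ≤ D * G
  have hlogβG : Real.logb β (2 * (L:ℝ) / (l:ℝ)) = G / Real.logb 2 β := by
    rw [hGdef]
    simp only [Real.logb]
    have h2 : Real.log 2 ≠ 0 := ne_of_gt (Real.log_pos one_lt_two)
    have hβ' : Real.log β ≠ 0 := ne_of_gt (Real.log_pos hβ1)
    field_simp
  have hKle : (K : ℝ) ≤ D * G := by
    have hfl : (⌊Real.logb β (2 * (L:ℝ) / (l:ℝ))⌋₊ : ℝ) ≤
        Real.logb β (2 * (L:ℝ) / (l:ℝ)) :=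
      Nat.floor_le (Real.logb_nonneg hβ1 (by linarith))
    have : (K:ℝ) = (⌊Real.logb β (2 * (L:ℝ) / (l:ℝ))⌋₊ : ℝ) + 1 := by
      rw [hKdef]; push_cast; ring
    rw [this, hDdef]
    have h1 : G / Real.logb 2 β = (1 / Real.logb 2 β) * G := by ring
    nlinarith [hfl, hlogβG]
  -- f maps J' into range K
  have hmaps : ∀ j ∈ J', f j ∈ Finset.range K := by
    intro j hj
    simp only [hJ'def, Finset.mem_filter] at hj
    have hjL : j ≤ L := (Finset.mem_Icc.mp (hJL hj.1)).2
    have hjt : (t:ℝ) ≤ (j:ℝ) := by exact_mod_cast hj.2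
    have hjpos : (0:ℝ) < (j:ℝ) := by linarith
    have hratio : (j:ℝ) / (t:ℝ) ≤ 2 * (L:ℝ) / (l:ℝ) := by
      rw [div_le_div_iff₀ ht0R hl0R]
      have hjL' : (j:ℝ) ≤ (L:ℝ) := by exact_mod_cast hjL
      nlinarith [ht_ge]
    have hmono : Real.logb β ((j:ℝ) / (t:ℝ)) ≤ Real.logb β (2 * (L:ℝ) / (l:ℝ)) :=
      Real.logb_le_logb_of_le hβ1 (by positivity) hratio
    have := Nat.floor_le_floor hmono
    simp only [Finset.mem_range, hfdef, hKdef]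
    omega
  -- pigeonhole
  have hsum : J'.card = ∑ b ∈ Finset.range K, (J'.filter (fun j => f j = b)).card :=
    Finset.card_eq_sum_card_fiberwise hmaps
  have hpigeon : ∃ b ∈ Finset.range K,
      (J'.card : ℝ) / (K : ℝ) ≤ ((J'.filter (fun j => f j = b)).card : ℝ) := by
    by_contra hcon
    push_neg at hcon
    have hlt : ∑ b ∈ Finset.range K, ((J'.filter (fun j => f j = b)).card : ℝ) <
        ∑ _b ∈ Finset.range K, (J'.card : ℝ) / (K : ℝ) :=
      Finset.sum_lt_sum_of_nonempty (by simp [hK0]) hcon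
    rw [Finset.sum_const, Finset.card_range, nsmul_eq_mul,
      mul_div_cancel₀ _ (ne_of_gt hK0R)] at hlt
    have : ((J'.card : ℕ) : ℝ) = ∑ b ∈ Finset.range K, ((J'.filter (fun j => f j = b)).card : ℝ) := by
      exact_mod_cast hsum
    linarith
  obtain ⟨b, _, hfiber⟩ := hpigeon
  set F := J'.filter (fun j => f j = b) with hFdef
  have hFpos : (0:ℝ) < (F.card : ℝ) := lt_of_lt_of_le (div_pos hcard'pos hK0R) hfiber
  have hFne : F.Nonempty := Finset.card_pos.mp (by exact_mod_cast hFpos)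
  set j₁ := F.min' hFne with hj1def
  set j₂ := F.max' hFne with hj2def
  have hj1F : j₁ ∈ F := F.min'_mem hFne
  have hj2F : j₂ ∈ F := F.max'_mem hFne
  have hFsubJ' : F ⊆ J' := Finset.filter_subset _ _
  have hj1J' : j₁ ∈ J' := (Finset.filter_subset _ _) hj1F
  have hj2J' : j₂ ∈ J' := (Finset.filter_subset _ _) hj2F
  have hj1J : j₁ ∈ J := hJ'sub hj1J'
  have hj2J : j₂ ∈ J := hJ'sub hj2J'
  have hj1t : t ≤ j₁ := by
    exact (Finset.mem_filter.mp hj1J').2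
  have hj2t : t ≤ j₂ := by
    exact (Finset.mem_filter.mp hj2J').2
  have hj12 : j₁ ≤ j₂ := F.min'_le _ hj2F
  have hb1 : ⌊Real.logb β ((j₁:ℝ) / (t:ℝ))⌋₊ = b := (Finset.mem_filter.mp hj1F).2
  have hb2 : ⌊Real.logb β ((j₂:ℝ) / (t:ℝ))⌋₊ = b := (Finset.mem_filter.mp hj2F).2
  have hj1le : ∀ j ∈ F, j₁ ≤ j := fun j hj => F.min'_le j hj
  have hj2ge : ∀ j ∈ F, j ≤ j₂ := fun j hj => F.le_max' j hj
  clear_value j₁ j₂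
  clear hj1F hj2F hj1def hj2def hFne hsum hmaps
  clear_value F f K J' t l G D β
  refine ⟨j₁, hj1J, j₂, hj2J, ?_, hj12, ?_, ?_⟩
  · have : (t:ℝ) ≤ (j₁:ℝ) := by exact_mod_cast hj1t
    linarith
  · -- j₂ ≤ β * j₁
    have hx1 : (1:ℝ) ≤ (j₁:ℝ) / (t:ℝ) := by
      rw [le_div_iff₀ ht0R]
      have : (t:ℝ) ≤ (j₁:ℝ) := by exact_mod_cast hj1t
      linarith
    have hx2 : (1:ℝ) ≤ (j₂:ℝ) / (t:ℝ) := by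
      rw [le_div_iff₀ ht0R]
      have : (t:ℝ) ≤ (j₂:ℝ) := by exact_mod_cast hj2t
      linarith
    have hlow : (b:ℝ) ≤ Real.logb β ((j₁:ℝ) / (t:ℝ)) := by
      rw [← hb1]
      exact Nat.floor_le (Real.logb_nonneg hβ1 hx1)
    have hhigh : Real.logb β ((j₂:ℝ) / (t:ℝ)) < (b:ℝ) + 1 := by
      rw [← hb2]
      exact Nat.lt_floor_add_one _
    have hsum1 : Real.logb β ((j₂:ℝ) / (t:ℝ)) <
        Real.logb β (β * ((j₁:ℝ) / (t:ℝ))) := by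
      rw [Real.logb_mul (ne_of_gt hβ0) (ne_of_gt (by linarith : (0:ℝ) < (j₁:ℝ) / (t:ℝ))),
        Real.logb_self_eq_one hβ1]
      linarith
    have hlt : (j₂:ℝ) / (t:ℝ) < β * ((j₁:ℝ) / (t:ℝ)) :=
      ((Real.logb_lt_logb_iff hβ1 (by linarith) (mul_pos hβ0 (by linarith))).mp hsum1)
    have hmul : (j₂:ℝ) < β * ((j₁:ℝ) / (t:ℝ)) * (t:ℝ) := by
      rw [div_lt_iff₀ ht0R] at hlt
      exact hlt
    have heq : β * ((j₁:ℝ) / (t:ℝ)) * (t:ℝ) = β * (j₁:ℝ) := by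
      field_simp
    linarith
  · -- counting
    have hFsub : F ⊆ J ∩ Finset.Icc j₁ j₂ := by
      intro j hj
      refine Finset.mem_inter.mpr ⟨hJ'sub (hFsubJ' hj), ?_⟩
      exact Finset.mem_Icc.mpr ⟨hj1le j hj, hj2ge j hj⟩
    have hcount : (F.card : ℝ) ≤ ((J ∩ Finset.Icc j₁ j₂).card : ℝ) := by
      exact_mod_cast Finset.card_le_card hFsub
    have key : 1 / (2 * D) * (l:ℝ) / G ≤ (J'.card : ℝ) / (K : ℝ) := by
      rw [div_le_div_iff₀ hG0 hK0R]
      have h1 : 1 / (2 * D) * (l:ℝ) * (K:ℝ) ≤ 1 / (2 * D) * (l:ℝ) * (D * G) := by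
        have : (0:ℝ) ≤ 1 / (2 * D) * (l:ℝ) := by positivity
        nlinarith [hKle]
      have h2 : 1 / (2 * D) * (l:ℝ) * (D * G) = (l:ℝ) / 2 * G := by
        field_simp
      have h3 : (l:ℝ) / 2 * G ≤ (J'.card : ℝ) * G := by
        nlinarith [hcard', hG0]
      linarith
    rw [← hGdef] at *
    calc (1 / (2 * D)) * (l:ℝ) / G ≤ (J'.card : ℝ) / (K : ℝ) := key
    _ ≤ (F.card : ℝ) := hfiber
    _ ≤ _ := hcount
end

section
/- Let b ∈ ℝᵐ (m ≥ 4), α ∈ (0,1), with ‖b‖_{1,∞} ≤ 1 and ‖b‖₁ ≥ C_α (log₂ log₂ m)². Then there exist a positive integer l ≤ log₂ m and a subset I₁ ⊆ [m] with n₁ := |I₁| satisfying m/n₁ ≥ 2^{l/2} and |bᵢ| ≥ 1/(l·n₁) for all i ∈ I₁. -/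
noncomputable def rearrange {m : ℕ} (b : Fin m → ℝ) : Fin m → ℝ :=
  fun i => |b (Tuple.sort (fun j => -|b j|) i)|

noncomputable def phiAux : ℕ → ℝ := fun n => if n = 0 then 0 else Real.log n + 1

lemma phiAux_step (n : ℕ) : 1/((n:ℝ)+1) ≤ phiAux (n+1) - phiAux n := by
  unfold phiAux
  rcases Nat.eq_zero_or_pos n with h | h
  · subst h; norm_num
  · have hn : (0:ℝ) < (n:ℝ) := by exact_mod_cast h
    rw [if_neg (by omega), if_neg (by omega)]
    have hlog : Real.log ((n:ℝ)/((n:ℝ)+1)) ≤ (n:ℝ)/((n:ℝ)+1) - 1 :=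
      Real.log_le_sub_one_of_pos (by positivity)
    rw [Real.log_div (by positivity) (by positivity)] at hlog
    have h1 : (n:ℝ)/((n:ℝ)+1) - 1 = -(1/((n:ℝ)+1)) := by field_simp; ring
    rw [h1] at hlog
    push_cast
    linarith

lemma harmonic_Ico (a b : ℕ) (hab : a ≤ b) :
    ∑ n ∈ Finset.Ico a b, 1/((n:ℝ)+1) ≤ Real.log b + 1 - Real.log a := by
  have h1 : ∑ n ∈ Finset.Ico a b, 1/((n:ℝ)+1) ≤ ∑ n ∈ Finset.Ico a b, (phiAux (n+1) - phiAux n) :=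
    Finset.sum_le_sum (fun n _ => phiAux_step n)
  have h2 : ∑ n ∈ Finset.Ico a b, (phiAux (n+1) - phiAux n) = phiAux b - phiAux a := by
    rw [Finset.sum_Ico_eq_sub _ hab, Finset.sum_range_sub, Finset.sum_range_sub]
    simp [phiAux]
  have h3 : phiAux b ≤ Real.log b + 1 := by
    unfold phiAux; split
    · next h => subst h; simp
    · simp
  have h4 : Real.log a ≤ phiAux a := by
    unfold phiAux; split
    · next h => subst h; simp
    · simp
  linarith

/-- Simplified Structure Proposition for divergent series: if `‖b‖_{1,∞} ≤ 1`
(i.e. `b*_i ≤ 1/i`) and `‖b‖₁ ≥ C_α (log₂ log₂ m)²`, then there exist `1 ≤ l ≤ log₂ m`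
and `I₁ ⊆ [m]` with `m/|I₁| ≥ 2^{l/2}` and `|bᵢ| ≥ 1/(l|I₁|)` for all `i ∈ I₁`. -/
theorem stmt8 (α : ℝ) (hα : α ∈ Set.Ioo (0:ℝ) 1) :
    ∃ C > 0, ∀ (m : ℕ) (b : Fin m → ℝ), 4 ≤ m →
      (∀ i : Fin m, rearrange b i ≤ 1 / ((i:ℝ)+1)) →
      C * (Real.logb 2 (Real.logb 2 m))^2 ≤ ∑ i, |b i| →
      ∃ (l : ℕ) (I₁ : Finset (Fin m)), 1 ≤ l ∧ (l : ℝ) ≤ Real.logb 2 m ∧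
        (2:ℝ) ^ ((l:ℝ)/2) ≤ (m:ℝ) / I₁.card ∧
        ∀ i ∈ I₁, 1 / ((l:ℝ) * I₁.card) ≤ |b i| := by
  refine ⟨10, by norm_num, ?_⟩
  intro m b hm4 hb hsum
  by_contra hcon
  push_neg at hcon
  have hm0 : 0 < m := by omega
  have hm0' : (0:ℝ) < m := by exact_mod_cast hm0
  set L := Real.logb 2 m with hL
  set σ := Tuple.sort (fun j => -|b j|) with hσ
  have hanti : Antitone (rearrange b) := by
    intro i j hij
    have h := Tuple.monotone_sort (fun j => -|b j|) hij
    simp only [Function.comp_apply, neg_le_neg_iff] at h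
    simpa [rearrange] using h
  set u : ℕ → ℝ := fun n => if hn : n < m then rearrange b ⟨n, hn⟩ else 0 with hu
  have hu0 : ∀ n, 0 ≤ u n := by
    intro n; rw [hu]; dsimp only; split
    · exact abs_nonneg _
    · exact le_rfl
  have hu1 : ∀ n, u n ≤ 1/((n:ℝ)+1) := by
    intro n; rw [hu]; dsimp only; split
    · next hn => simpa using hb ⟨n, hn⟩
    · positivity
  -- key consequence of the negated conclusion
  have key : ∀ (l n : ℕ), 1 ≤ l → (l:ℝ) ≤ L → ((n:ℝ)+1) * (2:ℝ)^((l:ℝ)/2) ≤ (m:ℝ) →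
      u n ≤ 1/((l:ℝ)*((n:ℝ)+1)) := by
    intro l n hl1 hlL hbound
    have hl0 : (0:ℝ) < l := by exact_mod_cast hl1
    have hrpos : (0:ℝ) < 1/((l:ℝ)*((n:ℝ)+1)) := by positivity
    rw [hu]; dsimp only; split
    · next hn =>
      by_contra hc
      push_neg at hc
      set I₁ : Finset (Fin m) := (Finset.Iic (⟨n, hn⟩ : Fin m)).map σ.toEmbedding with hI
      have hcard : I₁.card = n + 1 := by
        rw [hI, Finset.card_map, Fin.card_Iic]
      have hdiv : (2:ℝ)^((l:ℝ)/2) ≤ (m:ℝ) / I₁.card := by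
        rw [hcard]
        rw [le_div_iff₀ (by positivity)]
        push_cast
        linarith [hbound]
      obtain ⟨i, hiI, hlt⟩ := hcon l I₁ hl1 hlL hdiv
      rw [hI, Finset.mem_map] at hiI
      obtain ⟨j, hj, hji⟩ := hiI
      rw [Finset.mem_Iic] at hj
      have h1 : rearrange b ⟨n, hn⟩ ≤ rearrange b j := hanti hj
      have h2 : rearrange b j = |b i| := by
        rw [← hji, rearrange, ← hσ]; rfl
      rw [hcard] at hlt
      push_cast at hlt
      linarith
    · exact le_of_lt hrpos
  -- sum equality
  have hsum_eq : ∑ i, |b i| = ∑ n ∈ Finset.range m, u n := by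
    calc ∑ i, |b i| = ∑ i : Fin m, |b (σ i)| := (Equiv.sum_comp σ (fun i => |b i|)).symm
      _ = ∑ i : Fin m, u ↑i := by
          apply Finset.sum_congr rfl
          intro i _
          rw [hu]; dsimp only
          rw [dif_pos i.isLt]
          rw [rearrange, ← hσ]
      _ = ∑ n ∈ Finset.range m, u n := Fin.sum_univ_eq_sum_range u m
  -- integer log setup
  set M := Nat.log 2 m with hM
  have hM2 : 2 ≤ M := Nat.le_log_of_pow_le (by norm_num) (by omega)
  have hMpow : 2^M ≤ m := Nat.pow_log_le_self 2 (by omega)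
  have hMlt : m < 2^(M+1) := Nat.lt_pow_succ_log_self (by norm_num) m
  have hML : (M:ℝ) ≤ L := by
    rw [hL, hM]
    simpa using Real.natLog_le_logb m 2
  have hLM : L ≤ (M:ℝ) + 1 := by
    have h1 : (m:ℝ) ≤ (2:ℝ)^(M+1 : ℕ) := by exact_mod_cast hMlt.le
    have h2 : L ≤ Real.logb 2 ((2:ℝ)^(M+1:ℕ)) :=
      Real.logb_le_logb_of_le one_lt_two hm0' h1
    rw [Real.logb_pow] at h2
    rw [Real.logb_self_eq_one one_lt_two, mul_one] at h2
    push_cast at h2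
    linarith
  set J := Nat.log 2 M with hJ
  have hJM : 2^J ≤ M := Nat.pow_log_le_self 2 (by omega)
  have hMJ : M < 2^(J+1) := Nat.lt_pow_succ_log_self (by norm_num) M
  have hJD : (J:ℝ) ≤ Real.logb 2 L := by
    have h1 : (J:ℝ) ≤ Real.logb 2 M := by
      rw [hJ]; simpa using Real.natLog_le_logb M 2
    have h2 : Real.logb 2 (M:ℝ) ≤ Real.logb 2 L :=
      Real.logb_le_logb_of_le one_lt_two (by exact_mod_cast Nat.lt_of_lt_of_le (by norm_num) hM2) hML
    linarith
  -- cutoffs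
  set c : ℕ → ℕ := fun j => m / 2^(2^j) with hc
  have hcm : ∀ j, c j ≤ m := fun j => Nat.div_le_self _ _
  have hcsucc : ∀ j, c (j+1) = c j / 2^(2^j) := by
    intro j
    rw [hc]; dsimp only
    rw [Nat.div_div_eq_div_mul, ← pow_add]
    congr 2
    rw [pow_succ]
    omega
  have hcmono : ∀ j, c (j+1) ≤ c j := by
    intro j; rw [hcsucc j]; exact Nat.div_le_self _ _
  have hlog2pos : (0:ℝ) < Real.log 2 := Real.log_pos one_lt_two
  have hlogc : ∀ j, Real.log (c j) ≤ Real.log (c (j+1)) + (2:ℝ)^j * Real.log 2 + Real.log 2 := by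
    intro j
    have hlognn : (0:ℝ) ≤ Real.log (c (j+1)) := Real.log_natCast_nonneg _
    rcases Nat.eq_zero_or_pos (c j) with h0 | hpos
    · rw [h0]
      simp only [Nat.cast_zero, Real.log_zero]
      have h2j : (0:ℝ) ≤ (2:ℝ)^j := by positivity
      nlinarith
    · have hlt : c j < (c (j+1) + 1) * 2^(2^j) := by
        have h1 := Nat.lt_div_mul_add (a := c j) (b := 2^(2^j)) (by positivity)
        rw [← hcsucc j] at h1
        calc c j < c (j+1) * 2^(2^j) + 2^(2^j) := h1
          _ = (c (j+1) + 1) * 2^(2^j) := by ring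
      have hreal : (c j : ℝ) ≤ ((c (j+1) : ℝ) + 1) * (2:ℝ)^(2^j : ℕ) := by
        have := hlt.le
        exact_mod_cast this
      have hcast : Real.log (c j) ≤ Real.log (((c (j+1) : ℝ) + 1) * (2:ℝ)^(2^j:ℕ)) :=
        Real.log_le_log (by exact_mod_cast hpos) hreal
      rw [Real.log_mul (by positivity) (by positivity), Real.log_pow] at hcast
      have hstep : Real.log ((c (j+1) : ℝ) + 1) ≤ Real.log (c (j+1)) + Real.log 2 := by
        rcases Nat.eq_zero_or_pos (c (j+1)) with h0 | hp
        · rw [h0]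
          simp only [Nat.cast_zero, Real.log_zero, zero_add]
          norm_num
          exact hlog2pos.le
        · rw [← Real.log_mul (by positivity) (by norm_num)]
          apply Real.log_le_log (by positivity)
          have : (1:ℝ) ≤ (c (j+1) : ℝ) := by exact_mod_cast hp
          linarith
      push_cast at hcast ⊢
      linarith
  -- step bound
  have step : ∀ j : ℕ, ((2:ℝ)^j) ≤ L →
      ∑ n ∈ Finset.Ico (c (j+1)) (c j), u n ≤ 2*Real.log 2 + 1 := by
    intro j hjL
    have h2jpos : (0:ℝ) < (2:ℝ)^j := by positivity
    have hterm : ∀ n ∈ Finset.Ico (c (j+1)) (c j), u n ≤ (1/((2:ℝ)^j)) * (1/((n:ℝ)+1)) := by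
      intro n hn
      rw [Finset.mem_Ico] at hn
      have hnc : n + 1 ≤ c j := hn.2
      have hnat : (n+1) * 2^(2^j) ≤ m := by
        rw [hc] at hnc; dsimp only at hnc
        exact (Nat.le_div_iff_mul_le (by positivity)).mp hnc
      have hr : ((n:ℝ)+1) * (2:ℝ)^((((2^j : ℕ)):ℝ)/2) ≤ (m:ℝ) := by
        have h1 : (2:ℝ)^((((2^j:ℕ)):ℝ)/2) ≤ (2:ℝ)^(((2^j:ℕ)):ℝ) := by
          apply Real.rpow_le_rpow_of_exponent_le one_le_two
          have : (0:ℝ) ≤ ((2^j:ℕ):ℝ) := by positivity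
          linarith
        rw [Real.rpow_natCast] at h1
        have h2 : ((n:ℝ)+1) * ((2:ℝ)^(2^j:ℕ)) ≤ (m:ℝ) := by exact_mod_cast hnat
        calc ((n:ℝ)+1) * (2:ℝ)^((((2^j:ℕ)):ℝ)/2) ≤ ((n:ℝ)+1) * ((2:ℝ)^(2^j:ℕ)) :=
              mul_le_mul_of_nonneg_left h1 (by positivity)
          _ ≤ (m:ℝ) := h2
      have hk := key (2^j) n Nat.one_le_two_pow (by push_cast; exact hjL) hr
      calc u n ≤ 1/(((2^j:ℕ):ℝ)*((n:ℝ)+1)) := hk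
        _ = (1/((2:ℝ)^j)) * (1/((n:ℝ)+1)) := by
            push_cast
            rw [div_mul_div_comm, one_mul]
    calc ∑ n ∈ Finset.Ico (c (j+1)) (c j), u n
        ≤ ∑ n ∈ Finset.Ico (c (j+1)) (c j), (1/((2:ℝ)^j)) * (1/((n:ℝ)+1)) :=
          Finset.sum_le_sum hterm
      _ = (1/((2:ℝ)^j)) * ∑ n ∈ Finset.Ico (c (j+1)) (c j), 1/((n:ℝ)+1) := by
          rw [Finset.mul_sum]
      _ ≤ (1/((2:ℝ)^j)) * (Real.log (c j) + 1 - Real.log (c (j+1))) := by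
          apply mul_le_mul_of_nonneg_left (harmonic_Ico _ _ (hcmono j)) (by positivity)
      _ ≤ (1/((2:ℝ)^j)) * ((2:ℝ)^j * Real.log 2 + Real.log 2 + 1) := by
          apply mul_le_mul_of_nonneg_left _ (by positivity)
          linarith [hlogc j]
      _ ≤ 2*Real.log 2 + 1 := by
          rw [one_div, inv_mul_le_iff₀ h2jpos]
          have h1 : (1:ℝ) ≤ (2:ℝ)^j := one_le_pow₀ one_le_two
          nlinarith
  -- base bound
  have base : ∑ n ∈ Finset.Ico (c 0) m, u n ≤ 2 := by
    have hterm : ∀ n ∈ Finset.Ico (c 0) m, u n ≤ 2/(m:ℝ) := by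
      intro n hn
      rw [Finset.mem_Ico] at hn
      have hc0 : c 0 = m / 2 := by rw [hc]; norm_num
      have h1 : m ≤ 2*(n+1) := by omega
      have h1' : (m:ℝ) ≤ 2*((n:ℝ)+1) := by exact_mod_cast h1
      calc u n ≤ 1/((n:ℝ)+1) := hu1 n
        _ ≤ 2/(m:ℝ) := by
            rw [div_le_div_iff₀ (by positivity) hm0']
            linarith
    calc ∑ n ∈ Finset.Ico (c 0) m, u n ≤ (Finset.Ico (c 0) m).card • (2/(m:ℝ)) :=
          Finset.sum_le_card_nsmul _ _ _ hterm
      _ = ((Finset.Ico (c 0) m).card : ℝ) * (2/(m:ℝ)) := by rw [nsmul_eq_mul]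
      _ ≤ (m:ℝ) * (2/(m:ℝ)) := by
          apply mul_le_mul_of_nonneg_right _ (by positivity)
          rw [Nat.card_Ico]
          exact_mod_cast Nat.sub_le m (c 0)
      _ = 2 := by field_simp
  -- main induction
  have main : ∀ j, j ≤ J + 1 → ∑ n ∈ Finset.Ico (c j) m, u n ≤ 2 + (j:ℝ)*(2*Real.log 2 + 1) := by
    intro j
    induction j with
    | zero => intro _; simpa using base
    | succ j ih =>
      intro hj
      have hjJ : j ≤ J := by omega
      have h2jL : ((2:ℝ)^j) ≤ L := by
        have h1 : (2:ℕ)^j ≤ 2^J := Nat.pow_le_pow_right (by norm_num) hjJ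
        have h2 : ((2^j:ℕ):ℝ) ≤ (M:ℝ) := by exact_mod_cast le_trans h1 hJM
        push_cast at h2
        linarith
      have hsplit : ∑ n ∈ Finset.Ico (c (j+1)) (c j), u n + ∑ n ∈ Finset.Ico (c j) m, u n
          = ∑ n ∈ Finset.Ico (c (j+1)) m, u n :=
        Finset.sum_Ico_consecutive u (hcmono j) (hcm j)
      have h3 := step j h2jL
      have h4 := ih (by omega)
      push_cast
      linarith [hsplit]
  -- head bound
  have hM0' : (0:ℝ) < (M:ℝ) := by exact_mod_cast (by omega : 0 < M)
  have hhead : ∑ n ∈ Finset.Ico 0 (c (J+1)), u n ≤ 2*Real.log 2 + 1 := by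
    have hterm : ∀ n ∈ Finset.Ico 0 (c (J+1)), u n ≤ (1/(M:ℝ)) * (1/((n:ℝ)+1)) := by
      intro n hn
      rw [Finset.mem_Ico] at hn
      have hnc : n + 1 ≤ c (J+1) := hn.2
      have hnat : (n+1) * 2^(2^(J+1)) ≤ m := by
        rw [hc] at hnc; dsimp only at hnc
        exact (Nat.le_div_iff_mul_le (by positivity)).mp hnc
      have hr : ((n:ℝ)+1) * (2:ℝ)^((M:ℝ)/2) ≤ (m:ℝ) := by
        have hMle : (M:ℝ) ≤ ((2^(J+1):ℕ):ℝ) := by exact_mod_cast hMJ.le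
        have h1 : (2:ℝ)^((M:ℝ)/2) ≤ (2:ℝ)^(((2^(J+1):ℕ)):ℝ) := by
          apply Real.rpow_le_rpow_of_exponent_le one_le_two
          linarith
        rw [Real.rpow_natCast] at h1
        have h2 : ((n:ℝ)+1) * ((2:ℝ)^(2^(J+1):ℕ)) ≤ (m:ℝ) := by exact_mod_cast hnat
        calc ((n:ℝ)+1) * (2:ℝ)^((M:ℝ)/2) ≤ ((n:ℝ)+1) * ((2:ℝ)^(2^(J+1):ℕ)) :=
              mul_le_mul_of_nonneg_left h1 (by positivity)
          _ ≤ (m:ℝ) := h2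
      have hk := key M n (by omega) hML hr
      calc u n ≤ 1/((M:ℝ)*((n:ℝ)+1)) := hk
        _ = (1/(M:ℝ)) * (1/((n:ℝ)+1)) := by rw [div_mul_div_comm, one_mul]
    have hlogcm : Real.log (c (J+1)) ≤ L * Real.log 2 := by
      have h1 : Real.log (c (J+1)) ≤ Real.log m := by
        rcases Nat.eq_zero_or_pos (c (J+1)) with h0 | hp
        · rw [h0]
          simp only [Nat.cast_zero, Real.log_zero]
          exact Real.log_natCast_nonneg m
        · exact Real.log_le_log (by exact_mod_cast hp) (by exact_mod_cast hcm (J+1))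
      have h2 : L * Real.log 2 = Real.log m := by
        rw [hL, Real.logb, div_mul_cancel₀ _ (ne_of_gt hlog2pos)]
      linarith
    calc ∑ n ∈ Finset.Ico 0 (c (J+1)), u n
        ≤ ∑ n ∈ Finset.Ico 0 (c (J+1)), (1/(M:ℝ)) * (1/((n:ℝ)+1)) := Finset.sum_le_sum hterm
      _ = (1/(M:ℝ)) * ∑ n ∈ Finset.Ico 0 (c (J+1)), 1/((n:ℝ)+1) := by rw [Finset.mul_sum]
      _ ≤ (1/(M:ℝ)) * (Real.log (c (J+1)) + 1 - Real.log ((0:ℕ):ℝ)) := by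
          apply mul_le_mul_of_nonneg_left (harmonic_Ico _ _ (Nat.zero_le _)) (by positivity)
      _ ≤ 2*Real.log 2 + 1 := by
          simp only [Nat.cast_zero, Real.log_zero, sub_zero]
          rw [one_div, inv_mul_le_iff₀ hM0']
          have hM2' : (2:ℝ) ≤ (M:ℝ) := by exact_mod_cast hM2
          nlinarith [hlogcm, hLM, hlog2pos]
  -- total
  have htotal : ∑ n ∈ Finset.range m, u n ≤ 2 + ((J:ℝ)+2)*(2*Real.log 2 + 1) := by
    have hsplit : ∑ n ∈ Finset.Ico 0 (c (J+1)), u n + ∑ n ∈ Finset.Ico (c (J+1)) m, u n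
        = ∑ n ∈ Finset.Ico 0 m, u n :=
      Finset.sum_Ico_consecutive u (Nat.zero_le _) (hcm _)
    have h1 := main (J+1) le_rfl
    rw [Finset.range_eq_Ico]
    push_cast at h1
    linarith [hhead]
  -- conclusion
  set D := Real.logb 2 L with hD
  have hL2 : (2:ℝ) ≤ L := by
    have h4 : ((4:ℕ):ℝ) ≤ (m:ℝ) := by exact_mod_cast hm4
    have : Real.logb 2 ((4:ℕ):ℝ) ≤ L := Real.logb_le_logb_of_le one_lt_two (by norm_num) h4
    have h44 : Real.logb 2 ((4:ℕ):ℝ) = 2 := by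
      rw [show ((4:ℕ):ℝ) = (2:ℝ)^(2:ℕ) by norm_num, Real.logb_pow,
        Real.logb_self_eq_one one_lt_two]
      norm_num
    linarith
  have hD1 : (1:ℝ) ≤ D := by
    rw [hD]
    have : Real.logb 2 (2:ℝ) ≤ Real.logb 2 L :=
      Real.logb_le_logb_of_le one_lt_two (by norm_num) hL2
    rwa [Real.logb_self_eq_one one_lt_two] at this
  have hfin : ∑ i, |b i| ≤ 2 + (D+2)*(2*Real.log 2 + 1) := by
    rw [hsum_eq]
    have hfac : (0:ℝ) ≤ 2*Real.log 2 + 1 := by linarith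
    have : ((J:ℝ)+2)*(2*Real.log 2 + 1) ≤ (D+2)*(2*Real.log 2 + 1) := by
      apply mul_le_mul_of_nonneg_right _ hfac
      linarith [hJD]
    linarith [htotal]
  have hlog2lt : Real.log 2 < 0.6931471808 := Real.log_two_lt_d9
  nlinarith [hsum, hfin, hD1, hlog2pos, sq_nonneg (D-1), mul_le_mul_of_nonneg_left hD1 (le_trans zero_le_one hD1)]
end

section
/- Let E_B = {i ∈ [N] : |⟨Xᵢ, x⟩| ≥ B} for a fixed x and B > 0, and suppose the weak-ℓ₂ bound ‖(⟨Xᵢ, x⟩)_{i ∈ E_B}‖_{2,∞}² ≤ C(n + t²(N/|E_B|)^{4/q}|E_B|) holds. Then |E_B| ≤ C'_q (n/B² + N(t/B)^{q/2}). -/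
open scoped RealInnerProductSpace

/-- The square of the weak ℓ₂ norm of the finite sequence `(a i)_{i ∈ s}`:
`‖a‖²_{2,∞} = max_k k · (a*_k)² = max over nonempty `S ⊆ s` of `|S| · min_{i ∈ S} (a i)²`,
where `a*` is the non-increasing rearrangement of `(|a i|)`. -/
noncomputable def weakL2Sq {ι : Type*} [DecidableEq ι] (s : Finset ι) (a : ι → ℝ) : ℝ :=
  Finset.fold max 0
    (fun S => if h : S.Nonempty then (S.card : ℝ) * S.inf' h (fun i => (a i)^2) else 0)
    s.powerset

open Classical in
/-- Lemma 5.2 (large coefficients, deterministic step): if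
`E_B = {i : |⟨Xᵢ, x⟩| ≥ B}` satisfies the weak-ℓ₂ bound
`‖(⟨Xᵢ,x⟩)_{i∈E_B}‖²_{2,∞} ≤ C (n + t² (N/|E_B|)^{4/q} |E_B|)`, then
`|E_B| ≤ C'_q (n/B² + N (t/B)^{q/2})`. -/
theorem stmt15 (q C : ℝ) (hq : 4 < q) (hC : 0 < C) :
    ∃ C' > 0, ∀ (n N : ℕ) (t B : ℝ), 1 ≤ t → 0 < B →
      ∀ (X : Fin N → EuclideanSpace ℝ (Fin n)) (x : EuclideanSpace ℝ (Fin n))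
        (E : Finset (Fin N)),
      E = Finset.univ.filter (fun i => B ≤ |(⟪X i, x⟫)|) →
      weakL2Sq E (fun i => (⟪X i, x⟫)) ≤
        C * ((n:ℝ) + t^2 * ((N:ℝ)/E.card)^((4:ℝ)/q) * E.card) →
      (E.card : ℝ) ≤ C' * ((n:ℝ)/B^2 + N * (t/B)^(q/2)) := by
  have hq0 : (0:ℝ) < q := by linarith
  refine ⟨2*C + (2*C)^(q/(4:ℝ)), by positivity, ?_⟩
  intro n N t B ht hB X x E hE hw
  set a : Fin N → ℝ := fun i => ⟪X i, x⟫ with ha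
  have ht0 : (0:ℝ) < t := lt_of_lt_of_le one_pos ht
  rcases E.eq_empty_or_nonempty with h0 | hne
  · rw [h0]; simp only [Finset.card_empty, Nat.cast_zero]
    positivity
  have hm : (0:ℝ) < E.card := by exact_mod_cast hne.card_pos
  set m : ℝ := (E.card : ℝ) with hmdef
  have hBa : ∀ i ∈ E, B^2 ≤ (a i)^2 := by
    intro i hi
    rw [hE, Finset.mem_filter] at hi
    have h1 := hi.2
    nlinarith [abs_nonneg (a i), sq_abs (a i)]
  have hlow : m * B^2 ≤ weakL2Sq E a := by
    rw [weakL2Sq, Finset.le_fold_max]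
    right
    refine ⟨E, Finset.mem_powerset_self E, ?_⟩
    rw [dif_pos hne]
    exact mul_le_mul_of_nonneg_left (Finset.le_inf' hne _ hBa) (by positivity)
  have hmain : m * B^2 ≤ C * ((n:ℝ) + t^2 * ((N:ℝ)/m)^((4:ℝ)/q) * m) :=
    hlow.trans hw
  have hmN : m ≤ (N:ℝ) := by
    have h := Finset.card_le_univ E
    simp only [Finset.card_univ, Fintype.card_fin] at h
    rw [hmdef]; exact_mod_cast h
  have hN0 : (0:ℝ) < N := lt_of_lt_of_le hm hmN
  set r : ℝ := (N:ℝ)/m with hrdef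
  have hr0 : 0 < r := by positivity
  have hrpow0 : 0 < r ^ ((4:ℝ)/q) := Real.rpow_pos_of_pos hr0 _
  have hterm2 : (0:ℝ) ≤ (N:ℝ) * (t/B)^(q/2) := by positivity
  have hterm1 : (0:ℝ) ≤ (n:ℝ)/B^2 := by positivity
  have hc2 : (0:ℝ) ≤ (2*C)^(q/(4:ℝ)) := by positivity
  by_cases h : C * (t^2 * r^((4:ℝ)/q) * m) ≤ C * n
  · -- m B² ≤ 2 C n
    have h1 : m * B^2 ≤ 2 * C * n := by nlinarith
    have h2 : m ≤ 2 * C * ((n:ℝ)/B^2) := by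
      rw [mul_div_assoc'] at *
      rw [le_div_iff₀ (by positivity)]
      linarith
    nlinarith
  · push_neg at h
    have h1 : m * B^2 ≤ 2 * C * t^2 * r^((4:ℝ)/q) * m := by nlinarith
    have h2 : B^2 ≤ 2 * C * t^2 * r^((4:ℝ)/q) := by
      have := (mul_le_mul_iff_of_pos_right hm).mp (by linarith [h1] : B^2 * m ≤ (2 * C * t^2 * r^((4:ℝ)/q)) * m)
      exact this
    set D : ℝ := 2 * C * t^2 with hD
    have hD0 : 0 < D := by positivity
    have h3 : B^2 / D ≤ r^((4:ℝ)/q) := (div_le_iff₀ hD0).mpr (by linarith)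
    have h4 : (B^2/D)^(q/(4:ℝ)) ≤ r := by
      calc (B^2/D)^(q/(4:ℝ)) ≤ (r^((4:ℝ)/q))^(q/(4:ℝ)) :=
            Real.rpow_le_rpow (by positivity) h3 (by positivity)
        _ = r := by
            rw [← Real.rpow_mul hr0.le]
            rw [show (4:ℝ)/q * (q/4) = 1 by field_simp]
            exact Real.rpow_one r
    have h5 : m ≤ (N:ℝ) * (D/B^2)^(q/(4:ℝ)) := by
      have hmr : m * r = N := by rw [hrdef]; field_simp
      have hx : 0 < (B^2/D)^(q/(4:ℝ)) := Real.rpow_pos_of_pos (by positivity) _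
      have h6 : m * (B^2/D)^(q/(4:ℝ)) ≤ (N:ℝ) :=
        (mul_le_mul_of_nonneg_left h4 hm.le).trans_eq hmr
      have h7 : (D/B^2)^(q/(4:ℝ)) = ((B^2/D)^(q/(4:ℝ)))⁻¹ := by
        rw [← Real.inv_rpow (by positivity), inv_div]
      calc m = m * (B^2/D)^(q/(4:ℝ)) * ((B^2/D)^(q/(4:ℝ)))⁻¹ := by field_simp
        _ ≤ (N:ℝ) * ((B^2/D)^(q/(4:ℝ)))⁻¹ :=
            mul_le_mul_of_nonneg_right h6 (inv_nonneg.mpr hx.le)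
        _ = (N:ℝ) * (D/B^2)^(q/(4:ℝ)) := by rw [h7]
    have h8 : (D/B^2)^(q/(4:ℝ)) = (2*C)^(q/(4:ℝ)) * (t/B)^(q/2) := by
      have hDB : D/B^2 = (2*C) * (t/B)^(2:ℕ) := by
        rw [hD]; field_simp
      rw [hDB, Real.mul_rpow (by positivity) (by positivity)]
      congr 1
      rw [← Real.rpow_natCast (t/B) 2, ← Real.rpow_mul (by positivity),
        show ((2:ℕ):ℝ) * (q/4) = q/2 by push_cast; ring]
    have h9 : m ≤ (2*C)^(q/(4:ℝ)) * ((N:ℝ) * (t/B)^(q/2)) := by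
      rw [h8] at h5; linarith [h5]
    have hfin : 0 ≤ 2*C*((n:ℝ)/B^2) + 2*C*((N:ℝ)*(t/B)^(q/2)) +
        (2*C)^(q/(4:ℝ))*((n:ℝ)/B^2) := by positivity
    have e : (2*C + (2*C)^(q/(4:ℝ))) * ((n:ℝ)/B^2 + (N:ℝ)*(t/B)^(q/2)) =
        (2*C)^(q/(4:ℝ)) * ((N:ℝ)*(t/B)^(q/2)) + (2*C*((n:ℝ)/B^2) +
        2*C*((N:ℝ)*(t/B)^(q/2)) + (2*C)^(q/(4:ℝ))*((n:ℝ)/B^2)) := by ring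
    rw [e]
    linarith [h9, hfin]
end
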